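/- Let K ⊂ ℝ² be compact and let (νₙ)ₙ and ν be finite Borel measures on ℝ², all supported in K, such that νₙ converges to ν in the weak-* sense (∫ f dνₙ → ∫ f dν for every bounded continuous f : ℝ² → ℝ). Then for every fixed r > 0, ‖νₙ‖_r → ‖ν‖_r as n → ∞. Moreover, if (νₙ¹)ₙ, ν¹ and (νₙ²)ₙ, ν² are two such weak-* convergent families of finite Borel measures supported in K, then ⟨νₙ¹, νₙ²⟩_r → ⟨ν¹, ν²⟩_r as n → ∞. -/

import Mathlib

open Metric MeasureTheory Filter
open scoped ENNReal

/-- The scale-`r` bilinear form of two measures on the plane: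
`⟨μ₁, μ₂⟩_r = (1/r⁴) ∫ μ₁(B(z,r)) μ₂(B(z,r)) dz`. -/
noncomputable def rInner (μ₁ μ₂ : Measure (EuclideanSpace ℝ (Fin 2))) (r : ℝ) : ℝ :=
  (1 / r ^ 4) *
    ∫ z : EuclideanSpace ℝ (Fin 2), (μ₁ (ball z r)).toReal * (μ₂ (ball z r)).toReal

/-- The scale-`r` norm `‖μ‖_r = ⟨μ, μ⟩_r^{1/2}`. -/
noncomputable def rNorm (μ : Measure (EuclideanSpace ℝ (Fin 2))) (r : ℝ) : ℝ :=
  Real.sqrt (rInner μ μ r)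

abbrev Plane := EuclideanSpace ℝ (Fin 2)

lemma meas_ball (μ : Measure Plane) [SFinite μ] (r : ℝ) :
    Measurable fun z : Plane => μ (ball z r) := by
  have hs : MeasurableSet {p : Plane × Plane | dist p.2 p.1 < r} :=
    (isOpen_lt (continuous_dist.comp (continuous_snd.prodMk continuous_fst))
      continuous_const).measurableSet
  have h := measurable_measure_prodMk_left (ν := μ) hs
  convert h using 2 with z
  rfl

lemma meas_sphere (μ : Measure Plane) [SFinite μ] (r : ℝ) :
    Measurable fun z : Plane => μ (sphere z r) := by
  have hs : MeasurableSet {p : Plane × Plane | dist p.2 p.1 = r} :=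
    (isClosed_eq (continuous_dist.comp (continuous_snd.prodMk continuous_fst))
      continuous_const).measurableSet
  have h := measurable_measure_prodMk_left (ν := μ) hs
  convert h using 2 with z
  rfl

lemma ae_sphere_null (μ : Measure Plane) [IsFiniteMeasure μ] (r : ℝ) :
    ∀ᵐ z ∂(volume : Measure Plane), μ (sphere z r) = 0 := by
  set s : Set (Plane × Plane) := {p | dist p.2 p.1 = r} with hs_def
  have hs : MeasurableSet s :=
    (isClosed_eq (continuous_dist.comp (continuous_snd.prodMk continuous_fst))
      continuous_const).measurableSet
  have key : ∫⁻ z, μ (sphere z r) ∂(volume : Measure Plane) = 0 := by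
    have h1 : ∀ z : Plane, μ (sphere z r) = ∫⁻ x, s.indicator 1 (z, x) ∂μ := by
      intro z
      have : (fun x => s.indicator 1 (z, x)) = (sphere z r).indicator (1 : Plane → ℝ≥0∞) := by
        classical
        funext x
        rw [Set.indicator_apply, Set.indicator_apply]
        exact if_congr (by simp [hs_def, mem_sphere, dist_eq_norm]) rfl rfl
      rw [this, lintegral_indicator_one isClosed_sphere.measurableSet]
    have h2 : ∀ x : Plane, (∫⁻ z, s.indicator 1 (z, x) ∂(volume : Measure Plane)) = 0 := by
      intro x
      have : (fun z => s.indicator 1 (z, x)) = (sphere x r).indicator (1 : Plane → ℝ≥0∞) := by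
        classical
        funext z
        rw [Set.indicator_apply, Set.indicator_apply]
        exact if_congr (by simp [hs_def, mem_sphere, dist_eq_norm, norm_sub_rev]) rfl rfl
      rw [this, lintegral_indicator_one isClosed_sphere.measurableSet]
      exact Measure.addHaar_sphere _ x r
    calc ∫⁻ z, μ (sphere z r) ∂(volume : Measure Plane)
        = ∫⁻ z, ∫⁻ x, s.indicator 1 (z, x) ∂μ ∂(volume : Measure Plane) := by
          simp_rw [h1]
      _ = ∫⁻ x, ∫⁻ z, s.indicator 1 (z, x) ∂(volume : Measure Plane) ∂μ :=
          lintegral_lintegral_swap ((measurable_one.indicator hs).aemeasurable)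
      _ = 0 := by simp_rw [h2, lintegral_zero]
  have := (lintegral_eq_zero_iff (meas_sphere μ r)).mp key
  filter_upwards [this] with z hz using hz

lemma mass_tendsto (ν : ℕ → Measure Plane) (μ : Measure Plane)
    (hfin : ∀ n, IsFiniteMeasure (ν n)) (hfinμ : IsFiniteMeasure μ)
    (hconv : ∀ f : BoundedContinuousFunction Plane ℝ,
      Tendsto (fun n => ∫ x, f x ∂(ν n)) atTop (nhds (∫ x, f x ∂μ))) :
    Tendsto (fun n => (ν n Set.univ).toReal) atTop (nhds (μ Set.univ).toReal) := by
  have h := hconv (BoundedContinuousFunction.const _ (1 : ℝ))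
  haveI := hfinμ
  haveI := fun n => hfin n
  simpa [integral_const, measureReal_def] using h

lemma ball_tendsto (ν : ℕ → Measure Plane) (μ : Measure Plane)
    (hfin : ∀ n, IsFiniteMeasure (ν n)) (hfinμ : IsFiniteMeasure μ)
    (hconv : ∀ f : BoundedContinuousFunction Plane ℝ,
      Tendsto (fun n => ∫ x, f x ∂(ν n)) atTop (nhds (∫ x, f x ∂μ)))
    {z : Plane} {r : ℝ} (hz : μ (sphere z r) = 0) :
    Tendsto (fun n => (ν n (ball z r)).toReal) atTop (nhds (μ (ball z r)).toReal) := by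
  haveI := hfinμ
  haveI := fun n => hfin n
  -- weak convergence as finite measures
  set νF : ℕ → FiniteMeasure Plane := fun n => ⟨ν n, hfin n⟩ with hνF
  set μF : FiniteMeasure Plane := ⟨μ, hfinμ⟩ with hμF
  have hweak : Tendsto νF atTop (nhds μF) :=
    FiniteMeasure.tendsto_iff_forall_integral_tendsto.mpr (fun f => hconv f)
  have hC : ∀ F : Set Plane, IsClosed F →
      (atTop.limsup fun n => ν n F) ≤ μ F := fun F hF =>
    FiniteMeasure.limsup_measure_closed_le_of_tendsto hweak hF
  have hm := mass_tendsto ν μ hfin hfinμ hconv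
  -- notation
  set A := ball z r with hA
  set a := (μ A).toReal with ha
  have hcb : μ (closedBall z r) = μ A := by
    refine le_antisymm ?_ (measure_mono ball_subset_closedBall)
    calc μ (closedBall z r) ≤ μ (A ∪ sphere z r) := by
          rw [ball_union_sphere]
      _ ≤ μ A + μ (sphere z r) := measure_union_le _ _
      _ = μ A := by rw [hz, add_zero]
  -- the key eventual bounds
  have main : ∀ ε : ℝ, 0 < ε → ∀ᶠ n in atTop,
      |(ν n A).toReal - a| < 3 * ε := by
    intro ε hε
    have hεE : (ENNReal.ofReal ε) ≠ 0 := by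
      simp [ENNReal.ofReal_eq_zero, not_le, hε]
    -- upper bound via closed ball
    have hup : ∀ᶠ n in atTop, (ν n A).toReal ≤ a + ε := by
      have h1 : atTop.limsup (fun n => ν n (closedBall z r)) < μ A + ENNReal.ofReal ε :=
        lt_of_le_of_lt ((hC _ isClosed_closedBall).trans_eq hcb)
          (ENNReal.lt_add_right (measure_ne_top μ A) hεE)
      filter_upwards [eventually_lt_of_limsup_lt h1] with n hn
      have h2 : ν n A ≤ μ A + ENNReal.ofReal ε :=
        le_of_lt (lt_of_le_of_lt (measure_mono ball_subset_closedBall) hn)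
      have := ENNReal.toReal_mono (by finiteness) h2
      rwa [ENNReal.toReal_add (measure_ne_top μ A) ENNReal.ofReal_ne_top,
        ENNReal.toReal_ofReal hε.le] at this
    -- lower bound via complement
    have hlow : ∀ᶠ n in atTop, a - 2 * ε ≤ (ν n A).toReal := by
      have h1 : atTop.limsup (fun n => ν n Aᶜ) < μ Aᶜ + ENNReal.ofReal ε :=
        lt_of_le_of_lt (hC _ (isOpen_ball.isClosed_compl))
          (ENNReal.lt_add_right (measure_ne_top μ Aᶜ) hεE)
      have h2 : ∀ᶠ n in atTop, |(ν n Set.univ).toReal - (μ Set.univ).toReal| < ε := by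
        have := Metric.tendsto_atTop.mp hm ε hε
        obtain ⟨N, hN⟩ := this
        filter_upwards [eventually_ge_atTop N] with n hn
        simpa [Real.dist_eq] using hN n hn
      filter_upwards [eventually_lt_of_limsup_lt h1, h2] with n hn1 hn2
      have hsplit : (ν n A).toReal = (ν n Set.univ).toReal - (ν n Aᶜ).toReal := by
        have := measure_add_measure_compl (μ := ν n) (s := A) measurableSet_ball
        have h3 : (ν n A).toReal + (ν n Aᶜ).toReal = (ν n Set.univ).toReal := by
          rw [← ENNReal.toReal_add (measure_ne_top _ _) (measure_ne_top _ _), this]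
        linarith
      have hsplitμ : a = (μ Set.univ).toReal - (μ Aᶜ).toReal := by
        have := measure_add_measure_compl (μ := μ) (s := A) measurableSet_ball
        have h3 : a + (μ Aᶜ).toReal = (μ Set.univ).toReal := by
          rw [ha, ← ENNReal.toReal_add (measure_ne_top _ _) (measure_ne_top _ _), this]
        linarith
      have h4 : (ν n Aᶜ).toReal ≤ (μ Aᶜ).toReal + ε := by
        have := ENNReal.toReal_mono (by finiteness) hn1.le
        rwa [ENNReal.toReal_add (measure_ne_top μ Aᶜ) ENNReal.ofReal_ne_top,
          ENNReal.toReal_ofReal hε.le] at this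
      have h5 : (μ Set.univ).toReal - ε < (ν n Set.univ).toReal := by
        have := abs_lt.mp hn2
        linarith
      rw [hsplit]
      linarith [hsplitμ]
    filter_upwards [hup, hlow] with n h1 h2
    rw [abs_lt]
    constructor <;> nlinarith
  rw [Metric.tendsto_atTop]
  intro ε hε
  have := main (ε / 4) (by linarith)
  rw [eventually_atTop] at this
  obtain ⟨N, hN⟩ := this
  exact ⟨N, fun n hn => by have := hN n hn; rw [Real.dist_eq]; linarith [abs_nonneg ((ν n A).toReal - a)]⟩

lemma key (K : Set Plane) (hK : IsCompact K)
    (ν₁ : ℕ → Measure Plane) (μ₁ : Measure Plane)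
    (ν₂ : ℕ → Measure Plane) (μ₂ : Measure Plane)
    (hfin₁ : ∀ n, IsFiniteMeasure (ν₁ n)) (hfinμ₁ : IsFiniteMeasure μ₁)
    (hfin₂ : ∀ n, IsFiniteMeasure (ν₂ n)) (hfinμ₂ : IsFiniteMeasure μ₂)
    (hsupp₁ : ∀ n, ν₁ n Kᶜ = 0) (hsupp₂ : ∀ n, ν₂ n Kᶜ = 0)
    (hconv₁ : ∀ f : BoundedContinuousFunction Plane ℝ,
      Tendsto (fun n => ∫ x, f x ∂(ν₁ n)) atTop (nhds (∫ x, f x ∂μ₁)))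
    (hconv₂ : ∀ f : BoundedContinuousFunction Plane ℝ,
      Tendsto (fun n => ∫ x, f x ∂(ν₂ n)) atTop (nhds (∫ x, f x ∂μ₂)))
    (r : ℝ) (hr : 0 < r) :
    Tendsto (fun n => rInner (ν₁ n) (ν₂ n) r) atTop (nhds (rInner μ₁ μ₂ r)) := by
  haveI := hfinμ₁; haveI := hfinμ₂
  haveI := fun n => hfin₁ n; haveI := fun n => hfin₂ n
  -- mass bounds
  obtain ⟨C₁, hC₁'⟩ := (mass_tendsto ν₁ μ₁ hfin₁ hfinμ₁ hconv₁).bddAbove_range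
  obtain ⟨C₂, hC₂'⟩ := (mass_tendsto ν₂ μ₂ hfin₂ hfinμ₂ hconv₂).bddAbove_range
  have hC₁ : ∀ n, ((ν₁ n) Set.univ).toReal ≤ C₁ := fun n => hC₁' ⟨n, rfl⟩
  have hC₂ : ∀ n, ((ν₂ n) Set.univ).toReal ≤ C₂ := fun n => hC₂' ⟨n, rfl⟩
  have hb1 : ∀ n z, ((ν₁ n) (ball z r)).toReal ≤ C₁ := fun n z =>
    le_trans (ENNReal.toReal_mono (measure_ne_top _ _) (measure_mono (Set.subset_univ _))) (hC₁ n)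
  have hb2 : ∀ n z, ((ν₂ n) (ball z r)).toReal ≤ C₂ := fun n z =>
    le_trans (ENNReal.toReal_mono (measure_ne_top _ _) (measure_mono (Set.subset_univ _))) (hC₂ n)
  -- vanishing outside thickening
  have hzero : ∀ ν : Measure Plane, ν Kᶜ = 0 → ∀ z : Plane, z ∉ thickening r K →
      ν (ball z r) = 0 := by
    intro ν hν z hz
    refine measure_mono_null ?_ hν
    intro x hx hxK
    exact hz (mem_thickening_iff.mpr ⟨x, hxK, by rw [dist_comm]; exact mem_ball.mp hx⟩)
  -- measurability
  have hmeas : ∀ n, AEStronglyMeasurable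
      (fun z : Plane => ((ν₁ n) (ball z r)).toReal * ((ν₂ n) (ball z r)).toReal) volume :=
    fun n => (((meas_ball (ν₁ n) r).ennreal_toReal).mul
      ((meas_ball (ν₂ n) r).ennreal_toReal)).aestronglyMeasurable
  -- integrable bound
  set bound : Plane → ℝ := (thickening r K).indicator (fun _ => C₁ * C₂) with hbound
  have hint : Integrable bound volume := by
    rw [hbound, integrable_indicator_iff isOpen_thickening.measurableSet]
    exact integrableOn_const hK.isBounded.thickening.measure_lt_top.ne
  -- bound
  have h_bound : ∀ n, ∀ᵐ z ∂(volume : Measure Plane),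
      ‖((ν₁ n) (ball z r)).toReal * ((ν₂ n) (ball z r)).toReal‖ ≤ bound z := by
    intro n
    refine Filter.Eventually.of_forall fun z => ?_
    rw [Real.norm_eq_abs, abs_of_nonneg (mul_nonneg ENNReal.toReal_nonneg ENNReal.toReal_nonneg)]
    by_cases hz : z ∈ thickening r K
    · rw [hbound, Set.indicator_of_mem hz]
      exact mul_le_mul (hb1 n z) (hb2 n z) ENNReal.toReal_nonneg
        (le_trans ENNReal.toReal_nonneg (hb1 n z))
    · rw [hbound, Set.indicator_of_notMem hz, hzero _ (hsupp₁ n) z hz]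
      simp
  -- pointwise convergence a.e.
  have h_lim : ∀ᵐ z ∂(volume : Measure Plane),
      Tendsto (fun n => ((ν₁ n) (ball z r)).toReal * ((ν₂ n) (ball z r)).toReal) atTop
        (nhds ((μ₁ (ball z r)).toReal * (μ₂ (ball z r)).toReal)) := by
    filter_upwards [ae_sphere_null μ₁ r, ae_sphere_null μ₂ r] with z h1 h2
    exact (ball_tendsto ν₁ μ₁ hfin₁ hfinμ₁ hconv₁ h1).mul
      (ball_tendsto ν₂ μ₂ hfin₂ hfinμ₂ hconv₂ h2)
  have main := tendsto_integral_of_dominated_convergence bound hmeas hint h_bound h_lim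
  simpa only [rInner] using main.const_mul (1 / r ^ 4)

/-- If `(νₙ¹)`, `ν¹` and `(νₙ²)`, `ν²` are finite Borel measures on the plane,
all supported in a compact set `K`, with `νₙⁱ → νⁱ` weak-*, then for every fixed `r > 0` the
norms `‖νₙ¹‖_r` converge to `‖ν¹‖_r` and the bilinear forms `⟨νₙ¹, νₙ²⟩_r` converge to
`⟨ν¹, ν²⟩_r`. -/
theorem rNorm_rInner_weakstar_continuous
    (K : Set (EuclideanSpace ℝ (Fin 2))) (hK : IsCompact K)
    (ν₁ : ℕ → Measure (EuclideanSpace ℝ (Fin 2))) (μ₁ : Measure (EuclideanSpace ℝ (Fin 2)))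
    (ν₂ : ℕ → Measure (EuclideanSpace ℝ (Fin 2))) (μ₂ : Measure (EuclideanSpace ℝ (Fin 2)))
    (hfin₁ : ∀ n, IsFiniteMeasure (ν₁ n)) (hfinμ₁ : IsFiniteMeasure μ₁)
    (hfin₂ : ∀ n, IsFiniteMeasure (ν₂ n)) (hfinμ₂ : IsFiniteMeasure μ₂)
    (hsupp₁ : ∀ n, ν₁ n Kᶜ = 0) (hsuppμ₁ : μ₁ Kᶜ = 0)
    (hsupp₂ : ∀ n, ν₂ n Kᶜ = 0) (hsuppμ₂ : μ₂ Kᶜ = 0)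
    (hconv₁ : ∀ f : BoundedContinuousFunction (EuclideanSpace ℝ (Fin 2)) ℝ,
      Tendsto (fun n => ∫ x, f x ∂(ν₁ n)) atTop (nhds (∫ x, f x ∂μ₁)))
    (hconv₂ : ∀ f : BoundedContinuousFunction (EuclideanSpace ℝ (Fin 2)) ℝ,
      Tendsto (fun n => ∫ x, f x ∂(ν₂ n)) atTop (nhds (∫ x, f x ∂μ₂)))
    (r : ℝ) (hr : 0 < r) :
    Tendsto (fun n => rNorm (ν₁ n) r) atTop (nhds (rNorm μ₁ r)) ∧
    Tendsto (fun n => rInner (ν₁ n) (ν₂ n) r) atTop (nhds (rInner μ₁ μ₂ r)) := by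
  have h2 := key K hK ν₁ μ₁ ν₂ μ₂ hfin₁ hfinμ₁ hfin₂ hfinμ₂ hsupp₁ hsupp₂ hconv₁ hconv₂ r hr
  have h1 := key K hK ν₁ μ₁ ν₁ μ₁ hfin₁ hfinμ₁ hfin₁ hfinμ₁ hsupp₁ hsupp₁ hconv₁ hconv₁ r hr
  exact ⟨(Real.continuous_sqrt.continuousAt.tendsto).comp h1, h2⟩
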